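/- In a chordal graph, an assignment of 0/1 labels to edges yields no cycle with exactly one 0-edge if and only if it yields no triangle with exactly one 0-edge. Equivalently, satisfying the transitivity constraints for all triangles of a chordal graph suffices to satisfy all transitivity constraints. -/

import Mathlib

/-- The list of edges of the cycle determined by vertex list `l = [i₁,…,i_k]`:
successive pairs plus the closing edge `(i_k, i₁)`. -/
def cycEdges (l : List ℕ) : List (ℕ × ℕ) := l.zip (l.rotate 1)

/-- `l` is (the vertex list of) a cycle in the graph `G(E)`. -/
def IsCycle (E : ℕ → ℕ → Prop) (l : List ℕ) : Prop :=
  3 ≤ l.length ∧ ∀ p ∈ cycEdges l, E p.1 p.2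

/-- The number of 0-edges of the cycle `l` under the labeling `χ`. -/
def numZeroEdges (χ : ℕ → ℕ → Bool) (l : List ℕ) : ℕ :=
  ((cycEdges l).filter (fun p => !χ p.1 p.2)).length

/-- The assignment `χ` violates some transitivity constraint
`e_{[i₁,i₂]} ∧ ⋯ ∧ e_{[i_{k-1},i_k]} ⇒ e_{[i₁,i_k]}` over `E`. -/
def ViolatesTrans (E : ℕ → ℕ → Prop) (χ : ℕ → ℕ → Bool) : Prop :=
  ∃ l : List ℕ, 3 ≤ l.length ∧ l.Chain' E ∧
    (∀ p ∈ l.zip l.tail, χ p.1 p.2 = true) ∧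
    E (l.headD 0) (l.getLastD 0) ∧ χ (l.headD 0) (l.getLastD 0) = false

/-- The simple cycle (or acyclic path) `l` has a chord: an edge of `G(E)` joining two
vertices at positions `p < q` that are not adjacent in the cycle. -/
def HasChord (E : ℕ → ℕ → Prop) (l : List ℕ) : Prop :=
  ∃ p q : ℕ, p < q ∧ q < l.length ∧ p + 1 < q ∧ ¬(p = 0 ∧ q = l.length - 1) ∧
    E (l.getD p 0) (l.getD q 0)

lemma zip_rotate {α β : Type} (a : List α) (b : List β) (h : a.length = b.length) (n : ℕ) :
    (a.rotate n).zip (b.rotate n) = (a.zip b).rotate n := by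
  rcases eq_or_ne a [] with rfl | ha
  · have : b = [] := List.length_eq_zero_iff.mp (by simpa using h.symm)
    simp [this]
  have hza : (a.zip b).length = a.length := by simp [h]
  have hx : n % a.length ≤ a.length := le_of_lt (Nat.mod_lt _ (by simpa [List.length_pos_iff] using ha))
  rw [← List.rotate_mod a n, ← List.rotate_mod b n, ← List.rotate_mod (a.zip b) n, hza, ← h]
  rw [List.rotate_eq_drop_append_take hx, List.rotate_eq_drop_append_take (h ▸ hx),
    List.rotate_eq_drop_append_take (hza ▸ hx)]
  rw [List.zip_append (by simp [h]), List.zip, ← List.take_zipWith, ← List.drop_zipWith]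

lemma cycEdges_rotate (l : List ℕ) (n : ℕ) :
    cycEdges (l.rotate n) = (cycEdges l).rotate n := by
  unfold cycEdges
  rw [List.rotate_rotate, Nat.add_comm, ← List.rotate_rotate]
  rw [zip_rotate _ _ (by simp)]

lemma cycEdges_cons (v : ℕ) (L : List ℕ) :
    cycEdges (v :: L) = (v :: L).zip (L ++ [v]) := by
  have : (v :: L).rotate 1 = L ++ [v] := by
    rw [show (1:ℕ) = 0 + 1 from rfl, List.rotate_cons_succ, List.rotate_zero]
  rw [cycEdges, this]

lemma zip_split' (u v w : ℕ) (M N : List ℕ) :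
    (u :: (M ++ w :: N)).zip ((M ++ w :: N) ++ [v]) =
      (u :: M).zip (M ++ [w]) ++ (w :: N).zip (N ++ [v]) := by
  induction M generalizing u with
  | nil => simp
  | cons m M ih => simpa using ih m

lemma zip_split (v w : ℕ) (M N : List ℕ) :
    (v :: (M ++ w :: N)).zip ((M ++ w :: N) ++ [v]) =
      (v :: M).zip (M ++ [w]) ++ (w :: N).zip (N ++ [v]) := zip_split' v v w M N

lemma cycEdges_split (v w : ℕ) (M N : List ℕ) :
    cycEdges (v :: (M ++ w :: N)) =
      (v :: M).zip (M ++ [w]) ++ (w :: N).zip (N ++ [v]) := by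
  rw [cycEdges_cons, zip_split]

lemma cycEdges_dup_split (v : ℕ) (M N : List ℕ) :
    cycEdges (v :: (M ++ v :: N)) = cycEdges (v :: M) ++ cycEdges (v :: N) := by
  rw [cycEdges_split, cycEdges_cons, cycEdges_cons]

lemma cycEdges_c1 (v w : ℕ) (M : List ℕ) :
    cycEdges (v :: (M ++ [w])) = (v :: M).zip (M ++ [w]) ++ [(w, v)] := by
  simpa using cycEdges_split v w M []

lemma cycEdges_c2 (v w : ℕ) (N : List ℕ) :
    cycEdges (v :: w :: N) = (v, w) :: (w :: N).zip (N ++ [v]) := by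
  simpa using cycEdges_split v w [] N


lemma isCycle_rotate {E : ℕ → ℕ → Prop} {l : List ℕ} (h : IsCycle E l) (n : ℕ) :
    IsCycle E (l.rotate n) := by
  refine ⟨by simpa using h.1, fun p hp => h.2 p ?_⟩
  rw [cycEdges_rotate] at hp
  exact (List.rotate_perm _ _).subset hp

lemma numZeroEdges_rotate (χ : ℕ → ℕ → Bool) (l : List ℕ) (n : ℕ) :
    numZeroEdges χ (l.rotate n) = numZeroEdges χ l := by
  unfold numZeroEdges
  rw [cycEdges_rotate]
  exact ((List.rotate_perm _ _).filter _).length_eq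

lemma dup_split {l : List ℕ} (h : ¬ l.Nodup) :
    ∃ (A : List ℕ) (v : ℕ) (B C : List ℕ), l = A ++ v :: (B ++ v :: C) := by
  induction l with
  | nil => exact absurd List.nodup_nil h
  | cons x t ih =>
    by_cases hx : x ∈ t
    · obtain ⟨B, C, rfl⟩ := List.append_of_mem hx
      exact ⟨[], x, B, C, rfl⟩
    · have : ¬ t.Nodup := fun hn => h (List.nodup_cons.mpr ⟨hx, hn⟩)
      obtain ⟨A, v, B, C, rfl⟩ := ih this
      exact ⟨x :: A, v, B, C, rfl⟩

lemma handle_piece {E : ℕ → ℕ → Prop} {χ : ℕ → ℕ → Bool}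
    (hχsym : ∀ i j, χ i j = χ j i)
    (hT : ¬ ∃ i j k : ℕ, E i j ∧ E j k ∧ E i k ∧
        (if χ i j then 0 else 1) + (if χ j k then 0 else 1) +
          (if χ i k then 0 else 1) = 1)
    {n : ℕ}
    (ih : ∀ m, m < n → ∀ l : List ℕ, l.length = m → IsCycle E l → numZeroEdges χ l ≠ 1)
    (hn : 4 ≤ n)
    (v : ℕ) (P Q : List ℕ)
    (hlen : (v :: P).length + (v :: Q).length = n)
    (hEP : ∀ p ∈ cycEdges (v :: P), E p.1 p.2)
    (hEQ : ∀ p ∈ cycEdges (v :: Q), E p.1 p.2)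
    (hzP : numZeroEdges χ (v :: P) = 1)
    (hzQ : numZeroEdges χ (v :: Q) = 0) : False := by
  match P with
  | [] =>
    have hce : cycEdges [v] = [(v, v)] := by simp [cycEdges, List.rotate_singleton]
    have hvv : χ v v = false := by
      rw [numZeroEdges, hce] at hzP
      cases h : χ v v
      · rfl
      · simp [h] at hzP
    have hEvv : E v v := hEP (v, v) (by rw [hce]; simp)
    match Q with
    | [] => simp at hlen; omega
    | b :: Q' =>
      have hmem : (v, b) ∈ cycEdges (v :: b :: Q') := by rw [cycEdges_c2]; simp
      have hEvb : E v b := hEQ (v, b) hmem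
      have hvb : χ v b = true := by
        by_contra h
        rw [numZeroEdges, List.length_eq_zero_iff] at hzQ
        have : (v, b) ∈ (cycEdges (v :: b :: Q')).filter (fun p => !χ p.1 p.2) :=
          List.mem_filter.mpr ⟨hmem, by simp [Bool.not_eq_true] at h ⊢; exact h⟩
        rw [hzQ] at this
        simp at this
      exact hT ⟨v, v, b, hEvv, hEvb, hEvb, by simp [hvv, hvb]⟩
  | [m] =>
    have hc : cycEdges [v, m] = [(v, m), (m, v)] := by simpa using cycEdges_c2 v m []
    rw [numZeroEdges, hc] at hzP
    cases h : χ v m <;> simp [h, hχsym m v] at hzP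
  | m1 :: m2 :: P' =>
    have hcyc : IsCycle E (v :: m1 :: m2 :: P') := ⟨by simp, hEP⟩
    have hlt : (v :: m1 :: m2 :: P').length < n := by
      simp at hlen ⊢; omega
    exact ih _ hlt _ rfl hcyc hzP

lemma no_one_zero_cycle {E : ℕ → ℕ → Prop} {χ : ℕ → ℕ → Bool}
    (hsym : Symmetric E)
    (hchordal : ∀ l : List ℕ, IsCycle E l → l.Nodup → 4 ≤ l.length → HasChord E l)
    (hχsym : ∀ i j, χ i j = χ j i)
    (hT : ¬ ∃ i j k : ℕ, E i j ∧ E j k ∧ E i k ∧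
        (if χ i j then 0 else 1) + (if χ j k then 0 else 1) +
          (if χ i k then 0 else 1) = 1) :
    ∀ l, IsCycle E l → numZeroEdges χ l ≠ 1 := by
  suffices H : ∀ n, ∀ l : List ℕ, l.length = n → IsCycle E l → numZeroEdges χ l ≠ 1 from
    fun l => H l.length l rfl
  intro n
  induction n using Nat.strong_induction_on with
  | _ n ih =>
  intro l hlen hcyc hz
  have h3 : 3 ≤ n := hlen ▸ hcyc.1
  rcases eq_or_lt_of_le h3 with h3' | h4
  · obtain ⟨a, b, c, rfl⟩ := List.length_eq_three.mp (hlen.trans h3'.symm)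
    have hce : cycEdges [a, b, c] = [(a, b), (b, c), (c, a)] := by
      rw [show [a,b,c] = a :: [b,c] from rfl, cycEdges_cons]; rfl
    have hab : E a b := hcyc.2 (a, b) (by rw [hce]; simp)
    have hbc : E b c := hcyc.2 (b, c) (by rw [hce]; simp)
    have hca : E c a := hcyc.2 (c, a) (by rw [hce]; simp)
    rw [numZeroEdges, hce] at hz
    refine hT ⟨a, b, c, hab, hbc, hsym hca, ?_⟩
    rw [hχsym a c]
    cases h1 : χ a b <;> cases h2 : χ b c <;> cases h3 : χ c a <;>
      simp [h1, h2, h3] at hz ⊢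
  · have h4' : 4 ≤ n := h4
    by_cases hnd : l.Nodup
    · -- chord case
      obtain ⟨p, q, hpq, hql, hpq1, hne, hEchord⟩ := hchordal l hcyc hnd (by omega)
      rw [hlen] at hql hne
      set k := q - p with hk
      have hk2 : 2 ≤ k := by omega
      have hkn : k ≤ n - 2 := by omega
      have hlen' : (l.rotate p).length = n := by simp [hlen]
      have hcyc' := isCycle_rotate hcyc p
      have hz' := (numZeroEdges_rotate χ l p).trans hz
      obtain ⟨v, t, hvt⟩ := List.exists_cons_of_ne_nil
        (show l.rotate p ≠ [] by
          intro h; rw [h] at hlen'; simp at hlen'; omega)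
      have ht : t.length = n - 1 := by
        have := hlen'; rw [hvt] at this; simp at this; omega
      obtain ⟨w, N, hwN⟩ := List.exists_cons_of_ne_nil
        (show t.drop (k - 1) ≠ [] by
          intro h
          have := congrArg List.length h
          simp [ht] at this; omega)
      set M := t.take (k - 1) with hMdef
      have htMN : t = M ++ w :: N := by rw [hMdef, ← hwN, List.take_append_drop]
      have hdec : l.rotate p = v :: (M ++ w :: N) := by rw [hvt, htMN]
      have hM : M.length = k - 1 := by
        rw [hMdef, List.length_take]; omega
      have hN : N.length = n - k - 1 := by
        have := congrArg List.length htMN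
        rw [ht] at this; simp [hM] at this; omega
      -- identify v and w
      have hp_lt : p < l.length := by omega
      have hq_lt : q < l.length := by omega
      have h0lt : 0 < (l.rotate p).length := by rw [hlen']; omega
      have hklt : k < (l.rotate p).length := by rw [hlen']; omega
      have e1 : (0 + p) % l.length = p := by
        rw [hlen, Nat.zero_add]; exact Nat.mod_eq_of_lt (by omega)
      have e2 : (k + p) % l.length = q := by
        rw [hlen, show k + p = q by omega]; exact Nat.mod_eq_of_lt (by omega)
      have hv : (l.rotate p)[0]'h0lt = l[p] := by
        rw [List.getElem_rotate]
        simp only [e1]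
      have hw : (l.rotate p)[k]'hklt = l[q] := by
        rw [List.getElem_rotate]
        simp only [e2]
      have hv' : (l.rotate p)[0]'h0lt = v := by
        simp [hdec]
      have hw' : (l.rotate p)[k]'hklt = w := by
        have hopt : (l.rotate p)[k]? = some w := by
          rw [hdec, show k = (k - 1) + 1 by omega, List.getElem?_cons_succ,
            List.getElem?_append_right (by omega), hM]
          simp
        rw [List.getElem?_eq_getElem hklt] at hopt
        exact Option.some.inj hopt
      have hEvw : E v w := by
        rw [List.getD_eq_getElem l 0 hp_lt, List.getD_eq_getElem l 0 hq_lt] at hEchord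
        rw [← hv', hv, ← hw', hw]
        exact hEchord
      -- the two pieces
      have hsplitc : cycEdges (l.rotate p)
          = (v :: M).zip (M ++ [w]) ++ (w :: N).zip (N ++ [v]) := by
        rw [hdec, cycEdges_split]
      have hcycC1 : IsCycle E (v :: (M ++ [w])) := by
        constructor
        · simp [hM]; omega
        · intro e he
          rw [cycEdges_c1] at he
          rcases List.mem_append.mp he with h | h
          · exact hcyc'.2 e (hsplitc ▸ List.mem_append_left _ h)
          · simp at h; rw [h]; exact hsym hEvw
      have hcycC2 : IsCycle E (v :: w :: N) := by
        constructor
        · simp; omega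
        · intro e he
          rw [cycEdges_c2] at he
          rcases List.mem_cons.mp he with h | h
          · rw [h]; exact hEvw
          · exact hcyc'.2 e (hsplitc ▸ List.mem_append_right _ h)
      have hlenC1 : (v :: (M ++ [w])).length = k + 1 := by simp [hM]; omega
      have hlenC2 : (v :: w :: N).length = n - k + 1 := by simp [hN]; omega
      have ihC1 := ih (k + 1) (by omega) _ hlenC1 hcycC1
      have ihC2 := ih (n - k + 1) (by omega) _ hlenC2 hcycC2
      set zX := (((v :: M).zip (M ++ [w])).filter (fun e => !χ e.1 e.2)).length with hzX
      set zY := (((w :: N).zip (N ++ [v])).filter (fun e => !χ e.1 e.2)).length with hzY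
      have hzsum : zX + zY = 1 := by
        unfold numZeroEdges at hz'
        rw [hsplitc, List.filter_append, List.length_append] at hz'
        exact hz'
      have hC1z : numZeroEdges χ (v :: (M ++ [w]))
          = zX + (if χ w v then 0 else 1) := by
        unfold numZeroEdges
        rw [cycEdges_c1, List.filter_append, List.length_append]
        congr 1
        cases h : χ w v <;> simp [h]
      have hC2z : numZeroEdges χ (v :: w :: N)
          = (if χ v w then 0 else 1) + zY := by
        unfold numZeroEdges
        rw [cycEdges_c2, List.filter_cons]
        cases h : χ v w <;> simp [h, Nat.add_comm, hzY]
      rw [hC1z] at ihC1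
      rw [hC2z] at ihC2
      rw [hχsym w v] at ihC1
      cases h : χ v w <;> rw [h] at ihC1 ihC2 <;> simp at ihC1 ihC2 <;> omega
    · -- duplicate vertex case
      obtain ⟨A, v, B, C, rfl⟩ := dup_split hnd
      have hrot : (A ++ v :: (B ++ v :: C)).rotate A.length
          = v :: (B ++ v :: (C ++ A)) := by
        rw [List.rotate_eq_drop_append_take (by simp),
          List.drop_left, List.take_left]
        simp
      have hcyc' := isCycle_rotate hcyc A.length
      have hz' := (numZeroEdges_rotate χ _ A.length).trans hz
      rw [hrot] at hcyc' hz'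
      have hsplit := cycEdges_dup_split v B (C ++ A)
      have hzsum : numZeroEdges χ (v :: B) + numZeroEdges χ (v :: (C ++ A)) = 1 := by
        unfold numZeroEdges at hz' ⊢
        rw [hsplit, List.filter_append, List.length_append] at hz'
        exact hz'
      have hlen' : (v :: B).length + (v :: (C ++ A)).length = n := by
        simp at hlen ⊢; omega
      have hEP : ∀ p ∈ cycEdges (v :: B), E p.1 p.2 := fun p hp =>
        hcyc'.2 p (hsplit ▸ List.mem_append_left _ hp)
      have hEQ : ∀ p ∈ cycEdges (v :: (C ++ A)), E p.1 p.2 := fun p hp =>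
        hcyc'.2 p (hsplit ▸ List.mem_append_right _ hp)
      by_cases hb : numZeroEdges χ (v :: B) = 1
      · exact handle_piece hχsym hT ih h4' v B (C ++ A) hlen' hEP hEQ hb (by omega)
      · exact handle_piece hχsym hT ih h4' v (C ++ A) B (by omega) hEQ hEP
          (by omega) (by omega)

theorem stmt10 (E : ℕ → ℕ → Prop) (hsym : Symmetric E)
    (hchordal : ∀ l : List ℕ, IsCycle E l → l.Nodup → 4 ≤ l.length → HasChord E l)
    (χ : ℕ → ℕ → Bool) (hχsym : ∀ i j, χ i j = χ j i) :
    (¬ ∃ l : List ℕ, IsCycle E l ∧ numZeroEdges χ l = 1) ↔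
    (¬ ∃ i j k : ℕ, E i j ∧ E j k ∧ E i k ∧
        (if χ i j then 0 else 1) + (if χ j k then 0 else 1) +
          (if χ i k then 0 else 1) = 1) := by
  constructor
  · rintro hnc ⟨i, j, k, hij, hjk, hik, hsum⟩
    have hce : cycEdges [i, j, k] = [(i, j), (j, k), (k, i)] := by
      rw [show [i, j, k] = i :: [j, k] from rfl, cycEdges_cons]; rfl
    refine hnc ⟨[i, j, k], ⟨by simp, ?_⟩, ?_⟩
    · intro e he
      rw [hce] at he
      simp only [List.mem_cons, List.not_mem_nil, or_false] at he
      rcases he with rfl | rfl | rfl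
      · exact hij
      · exact hjk
      · exact hsym hik
    · rw [numZeroEdges, hce]
      cases c1 : χ i j <;> cases c2 : χ j k <;> cases c3 : χ i k <;>
        simp [c1, c2, c3, hχsym k i] at hsum ⊢
  · rintro hT ⟨l, hcyc, hz⟩
    exact no_one_zero_cycle hsym hchordal hχsym hT l hcyc hz
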